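/- arXiv:2103.00924 — 2 statements merged into one kernel-verified Lean document; each statement's English description precedes it below -/
import Mathlib

section
/- Let ρ be a tripartite state on H_A ⊗ H_B ⊗ H_C satisfying the condition d_{AB;C} ≥ d_{A;C}, meaning that for every sequential measurement Π^{AB} (measurement on A followed by conditional measurement on B) the induced change in conditional mutual information satisfies S_{C|Π^{AB}}(ρ) − S_{C|AB}(ρ) ≥ S_{C|Π^{A}}(ρ) − S_{C|A}(ρ). Then D_{A;B;C}(ρ) ≥ D_{A;B}(ρ^{AB}) + D_{A;C}(ρ^{AC}). -/
open Matrix Kronecker BigOperators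
open scoped ComplexOrder

noncomputable section

def IsState {n : Type*} [Fintype n] [DecidableEq n] (ρ : Matrix n n ℂ) : Prop :=
  ρ.PosSemidef ∧ ρ.trace = 1

/-- Von Neumann entropy via the eigenvalues of a Hermitian matrix. -/
noncomputable def vnEntropy {n : Type*} [Fintype n] [DecidableEq n] (ρ : Matrix n n ℂ) : ℝ :=
  if h : ρ.IsHermitian then ∑ i, Real.negMulLog (h.eigenvalues i) else 0

/-- A rank-one von Neumann measurement: a family of rank-one orthogonal
projections summing to the identity. -/
structure VNMeas (n : Type*) [Fintype n] [DecidableEq n] where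
  P : n → Matrix n n ℂ
  herm : ∀ j, (P j).IsHermitian
  idem : ∀ j, P j * P j = P j
  rankOne : ∀ j, (P j).trace = 1
  orth : ∀ j k, j ≠ k → P j * P k = 0
  sum_eq : ∑ j, P j = 1

variable {A B : Type*} [Fintype A] [DecidableEq A] [Fintype B] [DecidableEq B]

/-- reduced state on the first factor -/
noncomputable def margFst (ρ : Matrix (A × B) (A × B) ℂ) : Matrix A A ℂ :=
  fun a a' => ∑ b, ρ (a, b) (a', b)

/-- reduced state on the second factor -/
noncomputable def margSnd (ρ : Matrix (A × B) (A × B) ℂ) : Matrix B B ℂ :=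
  fun b b' => ∑ a, ρ (a, b) (a, b')

/-- the post-measurement state `Σ_j (Π_j ⊗ 1) ρ (Π_j ⊗ 1)` -/
noncomputable def measFst (M : VNMeas A) (ρ : Matrix (A × B) (A × B) ℂ) :
    Matrix (A × B) (A × B) ℂ :=
  ∑ j, (M.P j ⊗ₖ (1 : Matrix B B ℂ)) * ρ * (M.P j ⊗ₖ (1 : Matrix B B ℂ))

/-- quantum mutual information -/
noncomputable def mutualInfo (ρ : Matrix (A × B) (A × B) ℂ) : ℝ :=
  vnEntropy (margFst ρ) + vnEntropy (margSnd ρ) - vnEntropy ρ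

/-- bipartite quantum discord with measurement on the first party -/
noncomputable def discord (ρ : Matrix (A × B) (A × B) ℂ) : ℝ :=
  ⨅ M : VNMeas A,
    ((vnEntropy (measFst M ρ) - vnEntropy (margFst (measFst M ρ))) -
      (vnEntropy ρ - vnEntropy (margFst ρ)))


variable {C : Type*} [Fintype C] [DecidableEq C]

/-- threefold Kronecker product on `A × B × C` -/
noncomputable def kron3 (M : Matrix A A ℂ) (N : Matrix B B ℂ) (K : Matrix C C ℂ) :
    Matrix (A × B × C) (A × B × C) ℂ :=
  fun p q => M p.1 q.1 * N p.2.1 q.2.1 * K p.2.2 q.2.2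

/-- trace out `C`: the reduced state `ρ^{AB}` -/
noncomputable def ptrC3 (ρ : Matrix (A × B × C) (A × B × C) ℂ) : Matrix (A × B) (A × B) ℂ :=
  fun x y => ∑ c, ρ (x.1, x.2, c) (y.1, y.2, c)

/-- trace out `B`: the reduced state `ρ^{AC}` -/
noncomputable def ptrB3 (ρ : Matrix (A × B × C) (A × B × C) ℂ) : Matrix (A × C) (A × C) ℂ :=
  fun x y => ∑ b, ρ (x.1, b, x.2) (y.1, b, y.2)

/-- trace out `A`: the reduced state `ρ^{BC}` -/
noncomputable def ptrA3 (ρ : Matrix (A × B × C) (A × B × C) ℂ) : Matrix (B × C) (B × C) ℂ :=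
  fun x y => ∑ a, ρ (a, x) (a, y)

/-- the reduced state `ρ^{A}` of a tripartite state -/
noncomputable def ptrBC3 (ρ : Matrix (A × B × C) (A × B × C) ℂ) : Matrix A A ℂ :=
  fun a a' => ∑ z : B × C, ρ (a, z) (a', z)

/-- A sequential conditional measurement: a rank-one von Neumann measurement on `A`
followed by a conditional rank-one von Neumann measurement on `B`. -/
structure SeqMeas3 (A B : Type*) [Fintype A] [DecidableEq A] [Fintype B] [DecidableEq B] where
  fst : VNMeas A
  snd : A → VNMeas B

/-- state after the measurement on `A` only -/
noncomputable def meas1 (m : SeqMeas3 A B) (ρ : Matrix (A × B × C) (A × B × C) ℂ) :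
    Matrix (A × B × C) (A × B × C) ℂ :=
  ∑ j, kron3 (m.fst.P j) (1 : Matrix B B ℂ) (1 : Matrix C C ℂ) * ρ *
    kron3 (m.fst.P j) (1 : Matrix B B ℂ) (1 : Matrix C C ℂ)

/-- state after the full sequential measurement `Π^{AB}` -/
noncomputable def meas2 (m : SeqMeas3 A B) (ρ : Matrix (A × B × C) (A × B × C) ℂ) :
    Matrix (A × B × C) (A × B × C) ℂ :=
  ∑ j, ∑ k, kron3 (m.fst.P j) ((m.snd j).P k) (1 : Matrix C C ℂ) * ρ *
    kron3 (m.fst.P j) ((m.snd j).P k) (1 : Matrix C C ℂ)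

/-- the quantity optimized in the tripartite multipartite quantum discord,
`−S_{BC|A}(ρ) + S_{B|Π^A}(ρ) + S_{C|Π^{AB}}(ρ)`. -/
noncomputable def mqd3Val (m : SeqMeas3 A B) (ρ : Matrix (A × B × C) (A × B × C) ℂ) : ℝ :=
  (vnEntropy (ptrC3 (meas1 m ρ)) - vnEntropy (ptrBC3 (meas1 m ρ)))
    + (vnEntropy (meas2 m ρ) - vnEntropy (ptrC3 (meas2 m ρ)))
    - (vnEntropy ρ - vnEntropy (ptrBC3 ρ))

/-- the tripartite multipartite quantum discord `D_{A;B;C}` with ordering `A → B` -/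
noncomputable def mqd3 (ρ : Matrix (A × B × C) (A × B × C) ℂ) : ℝ :=
  ⨅ m : SeqMeas3 A B, mqd3Val m ρ

/-- lift a matrix on `A × B` to `A × B × C` by tensoring with the identity on `C` -/
noncomputable def liftAB (N : Matrix (A × B) (A × B) ℂ) :
    Matrix (A × B × C) (A × B × C) ℂ :=
  fun p q => N (p.1, p.2.1) (q.1, q.2.1) * (if p.2.2 = q.2.2 then 1 else 0)

/-- state after a von Neumann measurement on the composite party `AB` -/
noncomputable def measAB (M : VNMeas (A × B)) (ρ : Matrix (A × B × C) (A × B × C) ℂ) :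
    Matrix (A × B × C) (A × B × C) ℂ :=
  ∑ j, liftAB (M.P j) * ρ * liftAB (M.P j)

/-- bipartite quantum discord `D_{AB;C}` with `AB` regarded as a single measured party -/
noncomputable def discordAB_C (ρ : Matrix (A × B × C) (A × B × C) ℂ) : ℝ :=
  ⨅ M : VNMeas (A × B),
    ((vnEntropy (measAB M ρ) - vnEntropy (ptrC3 (measAB M ρ))) -
      (vnEntropy ρ - vnEntropy (ptrC3 ρ)))



/-! ### Auxiliary lemmas -/

section Aux

variable {n : Type*} [Fintype n] [DecidableEq n]

def trivMeas (n : Type*) [Fintype n] [DecidableEq n] : VNMeas n where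
  P j := Matrix.diagonal (fun i => if i = j then 1 else 0)
  herm j := by
    unfold Matrix.IsHermitian
    rw [Matrix.diagonal_conjTranspose]
    apply congrArg Matrix.diagonal
    funext i
    simp only [Pi.star_apply]
    split <;> simp
  idem j := by
    rw [Matrix.diagonal_mul_diagonal]
    apply congrArg Matrix.diagonal
    funext i; split <;> simp
  rankOne j := by
    simp [Matrix.trace_diagonal]
  orth j k hjk := by
    rw [Matrix.diagonal_mul_diagonal]
    ext i i'
    by_cases h : i = i' <;> simp [Matrix.diagonal_apply, h]
    rintro rfl rfl; exact hjk rfl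
  sum_eq := by
    ext i i'
    by_cases h : i = i' <;>
      simp [Matrix.sum_apply, Matrix.diagonal_apply, Matrix.one_apply, h]

instance : Nonempty (VNMeas n) := ⟨trivMeas n⟩

lemma sum_eigenvalues_eq_one {ρ : Matrix n n ℂ} (h : IsState ρ) :
    ∑ i, (h.1.1.eigenvalues i) = 1 := by
  have hs := h.1.1.spectral_theorem
  have ht : ρ.trace = ∑ i, ((h.1.1.eigenvalues i : ℝ) : ℂ) := by
    exact h.1.1.trace_eq_sum_eigenvalues
  have h2 := ht.symm.trans h.2
  exact_mod_cast h2

lemma eig_le_one {ρ : Matrix n n ℂ} (h : IsState ρ) (i : n) :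
    h.1.1.eigenvalues i ≤ 1 := by
  rw [← sum_eigenvalues_eq_one h]
  exact Finset.single_le_sum (fun j _ => h.1.eigenvalues_nonneg j) (Finset.mem_univ i)

lemma negMulLog_le_one {x : ℝ} (h0 : 0 ≤ x) : Real.negMulLog x ≤ 1 := by
  rcases eq_or_lt_of_le h0 with rfl | hx
  · simp [Real.negMulLog]
  · have hlog : Real.log x⁻¹ ≤ x⁻¹ - 1 := Real.log_le_sub_one_of_pos (by positivity)
    have hrw : Real.negMulLog x = x * Real.log x⁻¹ := by
      rw [Real.log_inv, Real.negMulLog]; ring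
    rw [hrw]
    calc x * Real.log x⁻¹ ≤ x * (x⁻¹ - 1) := mul_le_mul_of_nonneg_left hlog h0
      _ = 1 - x := by field_simp
      _ ≤ 1 := by linarith

lemma vnEntropy_nonneg {ρ : Matrix n n ℂ} (h : IsState ρ) : 0 ≤ vnEntropy ρ := by
  rw [vnEntropy, dif_pos h.1.1]
  exact Finset.sum_nonneg fun i _ =>
    Real.negMulLog_nonneg (h.1.eigenvalues_nonneg i) (eig_le_one h i)

lemma vnEntropy_le_card {ρ : Matrix n n ℂ} (h : IsState ρ) :
    vnEntropy ρ ≤ Fintype.card n := by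
  rw [vnEntropy, dif_pos h.1.1]
  calc ∑ i, Real.negMulLog (h.1.1.eigenvalues i) ≤ ∑ _i : n, (1:ℝ) :=
        Finset.sum_le_sum fun i _ => negMulLog_le_one (h.1.eigenvalues_nonneg i)
    _ = Fintype.card n := by simp

section Ptr
variable {m N : Type*} [Fintype m] [DecidableEq m] [Fintype N] [DecidableEq N]

/-- embedding matrix for a partial trace -/
def ptrE (e : n × m ≃ N) (b : m) : Matrix N n ℂ :=
  fun p x => if p = e (x, b) then 1 else 0

lemma ptr_eq_sum (e : n × m ≃ N) (ρ : Matrix N N ℂ) :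
    (fun x x' => ∑ b, ρ (e (x, b)) (e (x', b)) : Matrix n n ℂ)
      = ∑ b, (ptrE e b)ᴴ * ρ * (ptrE e b) := by
  funext x x'
  rw [Matrix.sum_apply]
  congr 1
  funext b
  simp [Matrix.mul_apply, ptrE, Matrix.conjTranspose_apply, Finset.sum_ite_eq,
    Finset.sum_ite_eq']

lemma PosSemidef.add' {M M' : Matrix n n ℂ} (h : M.PosSemidef) (h' : M'.PosSemidef) :
    (M + M').PosSemidef := by
  exact h.add h'

lemma posSemidef_sum {ι : Type*} (s : Finset ι) (f : ι → Matrix n n ℂ)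
    (h : ∀ i ∈ s, (f i).PosSemidef) : (∑ i ∈ s, f i).PosSemidef := by
  classical
  induction s using Finset.induction_on with
  | empty => simpa using Matrix.PosSemidef.zero
  | insert _ _ hns ih =>
    rw [Finset.sum_insert hns]
    exact PosSemidef.add' (h _ (Finset.mem_insert_self _ _))
      (ih fun i hi => h i (Finset.mem_insert_of_mem hi))

lemma ptr_trace (e : n × m ≃ N) (ρ : Matrix N N ℂ) :
    Matrix.trace (fun x x' => ∑ b, ρ (e (x, b)) (e (x', b)) : Matrix n n ℂ) = ρ.trace := by
  unfold Matrix.trace Matrix.diag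
  rw [← Equiv.sum_comp e (fun p => ρ p p), Fintype.sum_prod_type]

lemma isState_ptr (e : n × m ≃ N) {ρ : Matrix N N ℂ} (h : IsState ρ) :
    IsState (fun x x' => ∑ b, ρ (e (x, b)) (e (x', b)) : Matrix n n ℂ) := by
  constructor
  · rw [ptr_eq_sum]
    exact posSemidef_sum _ _ fun b _ =>
      (h.1.conjTranspose_mul_mul_same (ptrE e b))
  · rw [ptr_trace e ρ, h.2]
end Ptr

instance : Nonempty (SeqMeas3 A B) := ⟨⟨trivMeas A, fun _ => trivMeas B⟩⟩

lemma isState_margFst {ρ : Matrix (A × B) (A × B) ℂ} (h : IsState ρ) :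
    IsState (margFst ρ) := isState_ptr (Equiv.refl (A × B)) h

def eqvC3 : (A × B) × C ≃ A × B × C :=
  ⟨fun p => (p.1.1, p.1.2, p.2), fun q => ((q.1, q.2.1), q.2.2), fun p => rfl, fun q => rfl⟩

def eqvB3 : (A × C) × B ≃ A × B × C :=
  ⟨fun p => (p.1.1, p.2, p.1.2), fun q => ((q.1, q.2.2), q.2.1), fun p => rfl, fun q => rfl⟩

lemma isState_ptrC3 {ρ : Matrix (A × B × C) (A × B × C) ℂ} (h : IsState ρ) :
    IsState (ptrC3 ρ) := isState_ptr (eqvC3 (A := A) (B := B) (C := C)) h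

lemma isState_ptrB3 {ρ : Matrix (A × B × C) (A × B × C) ℂ} (h : IsState ρ) :
    IsState (ptrB3 ρ) := isState_ptr (eqvB3 (A := A) (B := B) (C := C)) h

lemma kron_herm (M : VNMeas A) (j : A) :
    (M.P j ⊗ₖ (1 : Matrix B B ℂ))ᴴ = M.P j ⊗ₖ (1 : Matrix B B ℂ) := by
  ext ⟨a, b⟩ ⟨a', b'⟩
  simp only [Matrix.conjTranspose_apply, Matrix.kroneckerMap_apply, Matrix.one_apply]
  by_cases hb : b = b'
  · subst hb
    simp only [if_true, eq_self_iff_true, mul_one]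
    exact (M.herm j).apply a a'
  · rw [if_neg hb, if_neg (Ne.symm hb)]
    simp

lemma isState_measFst (M : VNMeas A) {ρ : Matrix (A × B) (A × B) ℂ} (h : IsState ρ) :
    IsState (measFst M ρ) := by
  constructor
  · refine posSemidef_sum _ _ fun j _ => ?_
    have hps := h.1.mul_mul_conjTranspose_same (M.P j ⊗ₖ (1 : Matrix B B ℂ))
    rwa [kron_herm] at hps
  · rw [measFst, Matrix.trace_sum]
    have htr : ∀ j, ((M.P j ⊗ₖ (1 : Matrix B B ℂ)) * ρ * (M.P j ⊗ₖ (1 : Matrix B B ℂ))).trace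
        = ((M.P j ⊗ₖ (1 : Matrix B B ℂ)) * ρ).trace := by
      intro j
      rw [Matrix.trace_mul_cycle, ← Matrix.mul_kronecker_mul, M.idem j, one_mul]
    rw [Finset.sum_congr rfl fun j _ => htr j, ← Matrix.trace_sum, ← Finset.sum_mul]
    have hs : (∑ j, M.P j ⊗ₖ (1 : Matrix B B ℂ)) = (1 : Matrix (A × B) (A × B) ℂ) := by
      rw [← Matrix.one_kronecker_one (α := ℂ), ← M.sum_eq]
      ext ⟨a, b⟩ ⟨a', b'⟩
      simp [Matrix.sum_apply, Matrix.kroneckerMap_apply, Finset.sum_mul]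
    rw [hs, one_mul, h.2]

lemma discord_le {σ : Matrix (A × B) (A × B) ℂ} (h : IsState σ) (M : VNMeas A) :
    discord σ ≤ (vnEntropy (measFst M σ) - vnEntropy (margFst (measFst M σ))) -
      (vnEntropy σ - vnEntropy (margFst σ)) := by
  apply ciInf_le
  refine ⟨-(Fintype.card A : ℝ) - (vnEntropy σ - vnEntropy (margFst σ)), ?_⟩
  rintro x ⟨M', rfl⟩
  have h1 : 0 ≤ vnEntropy (measFst M' σ) := vnEntropy_nonneg (isState_measFst M' h)
  have h2 : vnEntropy (margFst (measFst M' σ)) ≤ Fintype.card A :=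
    vnEntropy_le_card (isState_margFst (isState_measFst M' h))
  dsimp only
  linarith

lemma margFst_ptrC3 (ρ : Matrix (A × B × C) (A × B × C) ℂ) :
    margFst (ptrC3 ρ) = ptrBC3 ρ := by
  funext a a'
  simp [margFst, ptrC3, ptrBC3, Fintype.sum_prod_type]

lemma margFst_ptrB3 (ρ : Matrix (A × B × C) (A × B × C) ℂ) :
    margFst (ptrB3 ρ) = ptrBC3 ρ := by
  funext a a'
  simp only [margFst, ptrB3, ptrBC3, Fintype.sum_prod_type]
  exact Finset.sum_comm

lemma ptrC3_conj (P : Matrix A A ℂ) (ρ : Matrix (A × B × C) (A × B × C) ℂ) :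
    ptrC3 ((P ⊗ₖ (1 : Matrix (B × C) (B × C) ℂ)) * ρ * (P ⊗ₖ (1 : Matrix (B × C) (B × C) ℂ)))
      = (P ⊗ₖ (1 : Matrix B B ℂ)) * (ptrC3 ρ) * (P ⊗ₖ (1 : Matrix B B ℂ)) := by
  funext ⟨a, b⟩ ⟨a', b'⟩
  simp [ptrC3, Matrix.mul_apply, Matrix.kroneckerMap_apply, Matrix.one_apply,
    Fintype.sum_prod_type, Finset.sum_mul, Finset.mul_sum, mul_ite, ite_mul,
    mul_zero, zero_mul, mul_one, one_mul, Finset.sum_ite_eq, Finset.sum_ite_eq']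
  rw [Finset.sum_comm]
  exact Finset.sum_congr rfl fun x1 _ => Finset.sum_comm

lemma ptrB3_conj (P : Matrix A A ℂ) (ρ : Matrix (A × B × C) (A × B × C) ℂ) :
    ptrB3 ((P ⊗ₖ (1 : Matrix (B × C) (B × C) ℂ)) * ρ * (P ⊗ₖ (1 : Matrix (B × C) (B × C) ℂ)))
      = (P ⊗ₖ (1 : Matrix C C ℂ)) * (ptrB3 ρ) * (P ⊗ₖ (1 : Matrix C C ℂ)) := by
  funext ⟨a, c⟩ ⟨a', c'⟩
  simp [ptrB3, Matrix.mul_apply, Matrix.kroneckerMap_apply, Matrix.one_apply,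
    Fintype.sum_prod_type, Finset.sum_mul, Finset.mul_sum, mul_ite, ite_mul,
    mul_zero, zero_mul, mul_one, one_mul, Finset.sum_ite_eq, Finset.sum_ite_eq']
  rw [Finset.sum_comm]
  exact Finset.sum_congr rfl fun x1 _ => Finset.sum_comm

lemma ptrC3_sum {ι : Type*} (s : Finset ι) (f : ι → Matrix (A × B × C) (A × B × C) ℂ) :
    ptrC3 (∑ j ∈ s, f j) = ∑ j ∈ s, ptrC3 (f j) := by
  funext x y
  simp only [ptrC3, Matrix.sum_apply]
  exact Finset.sum_comm

lemma ptrB3_sum {ι : Type*} (s : Finset ι) (f : ι → Matrix (A × B × C) (A × B × C) ℂ) :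
    ptrB3 (∑ j ∈ s, f j) = ∑ j ∈ s, ptrB3 (f j) := by
  funext x y
  simp only [ptrB3, Matrix.sum_apply]
  exact Finset.sum_comm

lemma kron3_one_one (P : Matrix A A ℂ) :
    kron3 P (1 : Matrix B B ℂ) (1 : Matrix C C ℂ)
      = P ⊗ₖ (1 : Matrix (B × C) (B × C) ℂ) := by
  funext ⟨a, b, c⟩ ⟨a', b', c'⟩
  simp only [kron3, Matrix.kroneckerMap_apply, Matrix.one_apply, Prod.mk.injEq]
  split_ifs <;> simp_all <;> ring

lemma meas1_eq (m : SeqMeas3 A B) (ρ : Matrix (A × B × C) (A × B × C) ℂ) :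
    meas1 m ρ = measFst m.fst ρ := by
  unfold meas1 measFst
  exact Finset.sum_congr rfl fun j _ => by rw [kron3_one_one]

lemma ptrC3_measFst (M : VNMeas A) (ρ : Matrix (A × B × C) (A × B × C) ℂ) :
    ptrC3 (measFst M ρ) = measFst M (ptrC3 ρ) := by
  unfold measFst
  rw [ptrC3_sum]
  exact Finset.sum_congr rfl fun j _ => ptrC3_conj _ _

lemma ptrB3_measFst (M : VNMeas A) (ρ : Matrix (A × B × C) (A × B × C) ℂ) :
    ptrB3 (measFst M ρ) = measFst M (ptrB3 ρ) := by
  unfold measFst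
  rw [ptrB3_sum]
  exact Finset.sum_congr rfl fun j _ => ptrB3_conj _ _

end Aux

/-- if `d_{AB;C} ≥ d_{A;C}` for every sequential measurement, then
`D_{A;B;C}(ρ) ≥ D_{A;B}(ρ^{AB}) + D_{A;C}(ρ^{AC})`. -/
theorem mqd3_ge_discordAB_add_discordAC
    (ρ : Matrix (A × B × C) (A × B × C) ℂ) (hρ : IsState ρ)
    (hd : ∀ m : SeqMeas3 A B,
      (vnEntropy (meas2 m ρ) - vnEntropy (ptrC3 (meas2 m ρ))) -
          (vnEntropy ρ - vnEntropy (ptrC3 ρ)) ≥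
        (vnEntropy (ptrB3 (meas1 m ρ)) - vnEntropy (ptrBC3 (meas1 m ρ))) -
          (vnEntropy (ptrB3 ρ) - vnEntropy (ptrBC3 ρ))) :
    mqd3 ρ ≥ discord (ptrC3 ρ) + discord (ptrB3 ρ) := by
  rw [ge_iff_le, mqd3]
  refine le_ciInf fun m => ?_
  have hC := discord_le (isState_ptrC3 hρ) m.fst
  have hB := discord_le (isState_ptrB3 hρ) m.fst
  have h1 : measFst m.fst (ptrC3 ρ) = ptrC3 (meas1 m ρ) := by
    rw [meas1_eq, ptrC3_measFst]
  have h2 : measFst m.fst (ptrB3 ρ) = ptrB3 (meas1 m ρ) := by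
    rw [meas1_eq, ptrB3_measFst]
  rw [h1, margFst_ptrC3, margFst_ptrC3] at hC
  rw [h2, margFst_ptrB3, margFst_ptrB3] at hB
  have hd' := hd m
  rw [mqd3Val]
  linarith


end
end

section
/- For a product state ρ = ρ^{AB} ⊗ ρ^C on H_A ⊗ H_B ⊗ H_C, the tripartite multipartite quantum discord reduces to the bipartite discord: D_{A;B;C}(ρ^{AB} ⊗ ρ^C) = D_{A;B}(ρ^{AB}). -/
open Matrix Kronecker BigOperators
open scoped ComplexOrder

noncomputable section
set_option linter.unusedSectionVars false
set_option maxHeartbeats 1000000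

section AuxLemmas
open Polynomial

lemma my_charpoly_diagonal {n : Type*} [Fintype n] [DecidableEq n] (d : n → ℂ) :
    (Matrix.diagonal d).charpoly = ∏ i, (X - C (d i)) := by
  have h : charmatrix (Matrix.diagonal d) = Matrix.diagonal fun i => (X : ℂ[X]) - C (d i) := by
    ext i j
    by_cases h : i = j
    · subst h; simp [charmatrix_apply_eq]
    · rw [charmatrix_apply_ne _ _ _ h, Matrix.diagonal_apply_ne _ h, Matrix.diagonal_apply_ne _ h]
      simp
  rw [Matrix.charpoly, h, Matrix.det_diagonal]

lemma my_charpoly_conj {n : Type*} [Fintype n] [DecidableEq n] (U M : Matrix n n ℂ)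
    (hU : star U * U = 1) : (U * M * star U).charpoly = M.charpoly := by
  have hU' : U * star U = 1 := mul_eq_one_comm.mpr hU
  have hC1 : ((star U).map (C : ℂ →+* ℂ[X])) * (U.map C) = 1 := by
    rw [← Matrix.map_mul, hU, Matrix.map_one _ (map_zero C) (map_one C)]
  have key : charmatrix (U * M * star U) = U.map C * charmatrix M * (star U).map C := by
    unfold charmatrix
    simp only [RingHom.mapMatrix_apply]
    rw [Matrix.mul_sub, Matrix.sub_mul]
    congr 1
    · rw [(Matrix.scalar_commute (X : ℂ[X]) (fun r => Commute.all _ r) (U.map C)).symm.eq,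
        Matrix.mul_assoc]
      rw [show (U.map (C : ℂ →+* ℂ[X])) * ((star U).map C) = 1 by
        rw [← Matrix.map_mul, hU', Matrix.map_one _ (map_zero C) (map_one C)]]
      rw [Matrix.mul_one]
    · rw [Matrix.map_mul, Matrix.map_mul]
  rw [Matrix.charpoly, Matrix.charpoly, key, Matrix.det_mul, Matrix.det_mul, mul_comm,
    ← mul_assoc, ← Matrix.det_mul, hC1, Matrix.det_one, one_mul]

lemma unit_star_mul {n : Type*} [Fintype n] [DecidableEq n] (u : Matrix.unitaryGroup n ℂ) :
    star (u : Matrix n n ℂ) * (u : Matrix n n ℂ) = 1 := u.2.1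

lemma herm_charpoly {n : Type*} [Fintype n] [DecidableEq n] {M : Matrix n n ℂ}
    (hM : M.IsHermitian) :
    M.charpoly = ∏ i, (X - C ((hM.eigenvalues i : ℝ) : ℂ)) := by
  conv_lhs => rw [hM.spectral_theorem, Unitary.conjStarAlgAut_apply]
  rw [my_charpoly_conj _ _ (unit_star_mul _), my_charpoly_diagonal]
  rfl

lemma sum_negMulLog_eq {n m : Type*} [Fintype n] [DecidableEq n] [Fintype m]
    {M : Matrix n n ℂ} (hM : M.IsHermitian) (d : m → ℝ)
    (hprod : M.charpoly = ∏ i, (X - C ((hM.eigenvalues i : ℝ) : ℂ)))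
    (h : M.charpoly = ∏ i, (X - C ((d i : ℝ) : ℂ))) :
    ∑ i, Real.negMulLog (hM.eigenvalues i) = ∑ i, Real.negMulLog (d i) := by
  have hms : Multiset.map (fun i => ((hM.eigenvalues i : ℝ) : ℂ)) Finset.univ.val =
      Multiset.map (fun i => ((d i : ℝ) : ℂ)) Finset.univ.val := by
    have e := hprod.symm.trans h
    rw [Finset.prod_eq_multiset_prod, Finset.prod_eq_multiset_prod] at e
    have e2 := congrArg Polynomial.roots e
    rwa [show (Multiset.map (fun i => X - C ((hM.eigenvalues i : ℝ) : ℂ)) Finset.univ.val)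
        = Multiset.map (fun a => X - C a)
            (Multiset.map (fun i => ((hM.eigenvalues i : ℝ) : ℂ)) Finset.univ.val) by
          rw [Multiset.map_map]; rfl,
      show (Multiset.map (fun i => X - C ((d i : ℝ) : ℂ)) Finset.univ.val)
        = Multiset.map (fun a => X - C a)
            (Multiset.map (fun i => ((d i : ℝ) : ℂ)) Finset.univ.val) by
          rw [Multiset.map_map]; rfl,
      Polynomial.roots_multiset_prod_X_sub_C, Polynomial.roots_multiset_prod_X_sub_C] at e2
  have hr : Multiset.map (fun i => hM.eigenvalues i) Finset.univ.val =
      Multiset.map (fun i => d i) Finset.univ.val := by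
    apply Multiset.map_injective (Complex.ofReal_injective)
    rwa [Multiset.map_map, Multiset.map_map]
  rw [Finset.sum_eq_multiset_sum, Finset.sum_eq_multiset_sum]
  rw [show Multiset.map (fun i => Real.negMulLog (hM.eigenvalues i)) Finset.univ.val
      = Multiset.map Real.negMulLog (Multiset.map (fun i => hM.eigenvalues i) Finset.univ.val) by
        rw [Multiset.map_map]; rfl,
    show Multiset.map (fun i => Real.negMulLog (d i)) Finset.univ.val
      = Multiset.map Real.negMulLog (Multiset.map (fun i => d i) Finset.univ.val) by
        rw [Multiset.map_map]; rfl, hr]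

lemma sum_eigenvalues_eq_one_s10 {n : Type*} [Fintype n] [DecidableEq n] {M : Matrix n n ℂ}
    (hM : M.IsHermitian) (h1 : M.trace = 1) : ∑ i, hM.eigenvalues i = 1 := by
  have ht := congrArg Matrix.trace hM.spectral_theorem
  rw [h1, Unitary.conjStarAlgAut_apply, Matrix.trace_mul_comm, ← Matrix.mul_assoc, unit_star_mul, Matrix.one_mul,
    Matrix.trace_diagonal] at ht
  have : ((∑ i, hM.eigenvalues i : ℝ) : ℂ) = 1 := by
    rw [Complex.ofReal_sum]; exact ht.symm
  exact_mod_cast this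
lemma vnEntropy_of_herm {n : Type*} [Fintype n] [DecidableEq n] {M : Matrix n n ℂ}
    (hM : M.IsHermitian) : vnEntropy M = ∑ i, Real.negMulLog (hM.eigenvalues i) := dif_pos hM

end AuxLemmas

variable {A B : Type*} [Fintype A] [DecidableEq A] [Fintype B] [DecidableEq B]

variable {C : Type*} [Fintype C] [DecidableEq C]

/-- the product state `ρ^{AB} ⊗ ρ^C` as a matrix on `A × B × C` -/
noncomputable def prodState3 (ρAB : Matrix (A × B) (A × B) ℂ) (ρC : Matrix C C ℂ) :
    Matrix (A × B × C) (A × B × C) ℂ :=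
  fun p q => ρAB (p.1, p.2.1) (q.1, q.2.1) * ρC p.2.2 q.2.2



section AuxLemmas2
open Polynomial

lemma prodState3_mul (N N' : Matrix (A × B) (A × B) ℂ) (K K' : Matrix C C ℂ) :
    prodState3 N K * prodState3 N' K' = prodState3 (N * N') (K * K') := by
  ext ⟨a, b, c⟩ ⟨a', b', c'⟩
  simp only [prodState3, Matrix.mul_apply, Fintype.sum_prod_type, Finset.sum_mul,
    Finset.mul_sum]
  conv_rhs => rw [Finset.sum_comm]
  apply Finset.sum_congr rfl; intro x _
  conv_rhs => rw [Finset.sum_comm]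
  apply Finset.sum_congr rfl; intro y _
  apply Finset.sum_congr rfl; intro z _
  ring

lemma prodState3_conjTranspose (N : Matrix (A × B) (A × B) ℂ) (K : Matrix C C ℂ) :
    (prodState3 N K)ᴴ = prodState3 Nᴴ Kᴴ := by
  ext ⟨a, b, c⟩ ⟨a', b', c'⟩
  simp [prodState3, Matrix.conjTranspose_apply, mul_comm]

lemma prodState3_one : (prodState3 (1 : Matrix (A × B) (A × B) ℂ) (1 : Matrix C C ℂ)) = 1 := by
  ext ⟨a, b, c⟩ ⟨a', b', c'⟩
  simp only [prodState3, Matrix.one_apply, Prod.mk.injEq]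
  by_cases h1 : a = a' ∧ b = b' <;> by_cases h2 : c = c' <;> simp_all

lemma prodState3_diagonal (x : A × B → ℂ) (y : C → ℂ) :
    prodState3 (Matrix.diagonal x) (Matrix.diagonal y) =
      Matrix.diagonal (fun p : A × B × C => x (p.1, p.2.1) * y p.2.2) := by
  ext ⟨a, b, c⟩ ⟨a', b', c'⟩
  simp only [prodState3, Matrix.diagonal_apply, Prod.mk.injEq]
  by_cases h1 : a = a' ∧ b = b' <;> by_cases h2 : c = c' <;> simp_all

lemma prodState3_isHermitian {N : Matrix (A × B) (A × B) ℂ} {K : Matrix C C ℂ}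
    (hN : N.IsHermitian) (hK : K.IsHermitian) : (prodState3 N K).IsHermitian := by
  unfold Matrix.IsHermitian
  rw [prodState3_conjTranspose, hN, hK]

lemma vnEntropy_prodState3 {N : Matrix (A × B) (A × B) ℂ} {K : Matrix C C ℂ}
    (hN : N.IsHermitian) (hK : K.IsHermitian) (hN1 : N.trace = 1) (hK1 : K.trace = 1) :
    vnEntropy (prodState3 N K) = vnEntropy N + vnEntropy K := by
  set U := (Matrix.IsHermitian.eigenvectorUnitary hN : Matrix (A × B) (A × B) ℂ) with hU
  set V := (Matrix.IsHermitian.eigenvectorUnitary hK : Matrix C C ℂ) with hV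
  have hUs : star U * U = 1 := unit_star_mul _
  have hVs : star V * V = 1 := unit_star_mul _
  have hWs : star (prodState3 U V) * (prodState3 U V) = 1 := by
    rw [Matrix.star_eq_conjTranspose, prodState3_conjTranspose, prodState3_mul,
      ← Matrix.star_eq_conjTranspose, ← Matrix.star_eq_conjTranspose, hUs, hVs, prodState3_one]
  have hherm := prodState3_isHermitian hN hK
  have hdecomp : prodState3 N K = (prodState3 U V) *
      Matrix.diagonal (fun p : A × B × C =>
        ((hN.eigenvalues (p.1, p.2.1) * hK.eigenvalues p.2.2 : ℝ) : ℂ)) *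
      star (prodState3 U V) := by
    conv_lhs => rw [hN.spectral_theorem, hK.spectral_theorem, Unitary.conjStarAlgAut_apply,
      Unitary.conjStarAlgAut_apply]
    rw [← prodState3_mul, ← prodState3_mul, prodState3_diagonal,
      Matrix.star_eq_conjTranspose (prodState3 U V), prodState3_conjTranspose]
    congr 1
    · congr 1
      congr 1
      funext p
      simp only [Function.comp_apply]
      push_cast
      rfl
  have hchar : (prodState3 N K).charpoly = ∏ p : A × B × C,
      (X - Polynomial.C ((hN.eigenvalues (p.1, p.2.1) * hK.eigenvalues p.2.2 : ℝ) : ℂ)) := by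
    rw [hdecomp, my_charpoly_conj _ _ hWs, my_charpoly_diagonal]
  have hsum := sum_negMulLog_eq hherm
      (fun p : A × B × C => hN.eigenvalues (p.1, p.2.1) * hK.eigenvalues p.2.2)
      (herm_charpoly hherm) hchar
  rw [vnEntropy_of_herm hherm, vnEntropy_of_herm hN, vnEntropy_of_herm hK, hsum]
  have hl : ∑ x, hN.eigenvalues x = 1 := sum_eigenvalues_eq_one_s10 hN hN1
  have hm : ∑ c, hK.eigenvalues c = 1 := sum_eigenvalues_eq_one_s10 hK hK1
  calc ∑ p : A × B × C, Real.negMulLog (hN.eigenvalues (p.1, p.2.1) * hK.eigenvalues p.2.2)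
      = ∑ a : A, ∑ b : B, ∑ c : C,
          Real.negMulLog (hN.eigenvalues (a, b) * hK.eigenvalues c) := by
        rw [Fintype.sum_prod_type]
        apply Finset.sum_congr rfl; intro a _
        rw [Fintype.sum_prod_type]
    _ = ∑ a : A, ∑ b : B, (1 * Real.negMulLog (hN.eigenvalues (a, b))
          + hN.eigenvalues (a, b) * ∑ c : C, Real.negMulLog (hK.eigenvalues c)) := by
        apply Finset.sum_congr rfl; intro a _
        apply Finset.sum_congr rfl; intro b _
        simp only [Real.negMulLog_mul, Finset.sum_add_distrib, ← Finset.sum_mul, ← Finset.mul_sum,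
          hm]
    _ = ∑ i, Real.negMulLog (hN.eigenvalues i) + ∑ i, Real.negMulLog (hK.eigenvalues i) := by
        simp only [one_mul, Finset.sum_add_distrib, ← Finset.sum_mul, ← Finset.mul_sum]
        rw [show (∑ i : A, ∑ j : B, hN.eigenvalues (i, j)) = 1 by
            rw [← Fintype.sum_prod_type]; exact hl,
          one_mul]
        conv_rhs => rw [Fintype.sum_prod_type]

end AuxLemmas2

section MoreAux
open Polynomial Kronecker

lemma kron3_eq (M : Matrix A A ℂ) (N : Matrix B B ℂ) (K : Matrix C C ℂ) :
    kron3 M N K = prodState3 (M ⊗ₖ N) K := by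
  ext ⟨a, b, c⟩ ⟨a', b', c'⟩
  simp [kron3, prodState3, Matrix.kroneckerMap_apply, mul_assoc]

lemma prodState3_sum {ι : Type*} (s : Finset ι) (f : ι → Matrix (A × B) (A × B) ℂ)
    (K : Matrix C C ℂ) :
    prodState3 (∑ j ∈ s, f j) K = ∑ j ∈ s, prodState3 (f j) K := by
  ext ⟨a, b, c⟩ ⟨a', b', c'⟩
  simp [prodState3, Matrix.sum_apply, Finset.sum_mul]

lemma ptrC3_prod (N : Matrix (A × B) (A × B) ℂ) (K : Matrix C C ℂ) (h : K.trace = 1) :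
    ptrC3 (prodState3 N K) = N := by
  ext ⟨a, b⟩ ⟨a', b'⟩
  simp only [ptrC3, prodState3]
  rw [← Finset.mul_sum, show (∑ c, K c c) = K.trace from by simp [Matrix.trace, Matrix.diag],
    h, mul_one]

lemma ptrBC3_prod (N : Matrix (A × B) (A × B) ℂ) (K : Matrix C C ℂ) (h : K.trace = 1) :
    ptrBC3 (prodState3 N K) = margFst N := by
  ext a a'
  have hs : ptrBC3 (prodState3 N K) a a' = ∑ b, ∑ c, N (a, b) (a', b) * K c c := by
    simp only [ptrBC3, prodState3]
    rw [Fintype.sum_prod_type]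
  rw [hs]
  simp only [← Finset.mul_sum]
  rw [show (∑ c, K c c) = K.trace from by simp [Matrix.trace, Matrix.diag], h]
  simp [margFst]

lemma kron_sum_right {ι : Type*} (s : Finset ι) (M : Matrix A A ℂ) (f : ι → Matrix B B ℂ) :
    ∑ j ∈ s, (M ⊗ₖ f j) = M ⊗ₖ (∑ j ∈ s, f j) := by
  ext ⟨a, b⟩ ⟨a', b'⟩
  simp [Matrix.kroneckerMap_apply, Matrix.sum_apply, Finset.mul_sum]

lemma kron_sum_left {ι : Type*} (s : Finset ι) (f : ι → Matrix A A ℂ) (N : Matrix B B ℂ) :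
    ∑ j ∈ s, (f j ⊗ₖ N) = (∑ j ∈ s, f j) ⊗ₖ N := by
  ext ⟨a, b⟩ ⟨a', b'⟩
  simp [Matrix.kroneckerMap_apply, Matrix.sum_apply, Finset.sum_mul]

lemma kron_isHermitian {M : Matrix A A ℂ} {N : Matrix B B ℂ}
    (hM : M.IsHermitian) (hN : N.IsHermitian) : (M ⊗ₖ N).IsHermitian := by
  show (M ⊗ₖ N)ᴴ = M ⊗ₖ N
  ext ⟨a, b⟩ ⟨a', b'⟩
  simp only [Matrix.conjTranspose_apply, Matrix.kroneckerMap_apply, star_mul']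
  rw [mul_comm, ← Matrix.conjTranspose_apply, ← Matrix.conjTranspose_apply, hM.eq, hN.eq]
  exact mul_comm _ _

end MoreAux

noncomputable def stdMeas (D : Type*) [Fintype D] [DecidableEq D] : VNMeas D where
  P j := Matrix.diagonal (fun k => if k = j then 1 else 0)
  herm j := by
    show _ᴴ = _
    rw [Matrix.diagonal_conjTranspose]
    exact congrArg Matrix.diagonal (funext fun k => by simp [Pi.star_apply, apply_ite])
  idem j := by
    rw [Matrix.diagonal_mul_diagonal]
    exact congrArg Matrix.diagonal (funext fun k => by by_cases h : k = j <;> simp [h])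
  rankOne j := by
    rw [Matrix.trace_diagonal]
    simp
  orth j k hjk := by
    rw [Matrix.diagonal_mul_diagonal,
      show (fun i => (if i = j then (1 : ℂ) else 0) * (if i = k then 1 else 0)) =
        (fun _ => (0 : ℂ)) from funext fun i => by
          by_cases h2 : i = j <;> by_cases h3 : i = k <;> simp_all,
      Matrix.diagonal_zero]
  sum_eq := by
    ext a b
    rw [Matrix.sum_apply]
    by_cases h : a = b
    · subst h
      simp [Matrix.diagonal_apply_eq, Matrix.one_apply_eq]
    · simp [Matrix.diagonal_apply_ne _ h, Matrix.one_apply_ne h]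

/-- `D_{A;B;C}(ρ^{AB} ⊗ ρ^C) = D_{A;B}(ρ^{AB})`. -/
theorem mqd3_prod_eq_discord
    (ρAB : Matrix (A × B) (A × B) ℂ) (ρC : Matrix C C ℂ)
    (hAB : IsState ρAB) (hC : IsState ρC) :
    mqd3 (prodState3 ρAB ρC) = discord ρAB := by
  have hABh : ρAB.IsHermitian := hAB.1.1
  have hCh : ρC.IsHermitian := hC.1.1
  have key : ∀ m : SeqMeas3 A B, mqd3Val m (prodState3 ρAB ρC) =
      (vnEntropy (measFst m.fst ρAB) - vnEntropy (margFst (measFst m.fst ρAB))) -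
        (vnEntropy ρAB - vnEntropy (margFst ρAB)) := by
    intro m
    set R : A → B → Matrix (A × B) (A × B) ℂ :=
      fun j k => (m.fst.P j ⊗ₖ (m.snd j).P k) with hR
    set τ : Matrix (A × B) (A × B) ℂ := ∑ j, ∑ k, R j k * ρAB * R j k with hτ
    have hRherm : ∀ j k, (R j k).IsHermitian :=
      fun j k => kron_isHermitian (m.fst.herm j) ((m.snd j).herm k)
    have hRidem : ∀ j k, R j k * R j k = R j k := by
      intro j k
      simp only [hR]
      rw [← Matrix.mul_kronecker_mul, m.fst.idem j, (m.snd j).idem k]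
    have hRsum : ∑ j, ∑ k, R j k = 1 := by
      have h1 : ∀ j, ∑ k, R j k = m.fst.P j ⊗ₖ 1 := by
        intro j
        simp only [hR]
        rw [kron_sum_right, (m.snd j).sum_eq]
      simp only [h1]
      rw [kron_sum_left, m.fst.sum_eq, Matrix.one_kronecker_one]
    have hτherm : τ.IsHermitian := by
      show _ᴴ = _
      rw [hτ, Matrix.conjTranspose_sum]
      apply Finset.sum_congr rfl; intro j _
      rw [Matrix.conjTranspose_sum]
      apply Finset.sum_congr rfl; intro k _
      rw [Matrix.conjTranspose_mul, Matrix.conjTranspose_mul, (hRherm j k).eq, hABh.eq,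
        Matrix.mul_assoc]
    have hτtr : τ.trace = 1 := by
      rw [hτ, Matrix.trace_sum]
      have hterm : ∀ j k, (R j k * ρAB * R j k).trace = (ρAB * R j k).trace := by
        intro j k
        rw [Matrix.trace_mul_comm, ← Matrix.mul_assoc, hRidem j k, Matrix.trace_mul_comm]
      simp only [Matrix.trace_sum, hterm, ← Matrix.trace_mul_comm (ρAB)]
      simp only [← Matrix.trace_sum, ← Matrix.mul_sum]
      rw [hRsum, Matrix.mul_one, hAB.2]
    have h1 : meas1 m (prodState3 ρAB ρC) = prodState3 (measFst m.fst ρAB) ρC := by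
      unfold meas1 measFst
      simp only [kron3_eq, prodState3_mul, Matrix.one_mul, Matrix.mul_one, ← prodState3_sum]
    have h2 : meas2 m (prodState3 ρAB ρC) = prodState3 τ ρC := by
      unfold meas2
      simp only [kron3_eq, prodState3_mul, Matrix.one_mul, Matrix.mul_one, ← prodState3_sum]
      rfl
    unfold mqd3Val
    rw [h1, h2, ptrC3_prod _ _ hC.2, ptrC3_prod _ _ hC.2, ptrBC3_prod _ _ hC.2,
      ptrBC3_prod _ _ hC.2, vnEntropy_prodState3 hτherm hCh hτtr hC.2,
      vnEntropy_prodState3 hABh hCh hAB.2 hC.2]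
    ring
  unfold mqd3 discord
  rw [iInf, iInf]
  congr 1
  ext x
  constructor
  · rintro ⟨m, rfl⟩
    exact ⟨m.fst, (key m).symm⟩
  · rintro ⟨M, rfl⟩
    exact ⟨⟨M, fun _ => stdMeas B⟩, key _⟩

end
end
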